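/- Let T be an expandable tree (γ_T > 1) and let 𝒯 ⊆ {0,1}^T be a tree-shift. Then the surface entropy h^{(S)}(𝒯) is positive if and only if 𝒯 has the boundary independence property. -/

import Mathlib

open Filter

/-- A (rooted, locally finite) tree realized as a set of finite words over the
`d` generators: it contains the root (the empty word) and is closed under prefixes. -/
def IsTree {d : ℕ} (T : Set (List (Fin d))) : Prop :=
  ([] : List (Fin d)) ∈ T ∧ ∀ w ∈ T, ∀ u : List (Fin d), u <+: w → u ∈ T

/-- `T_n`: the set of vertices of `T` at distance `n` from the root. -/
def level {d : ℕ} (T : Set (List (Fin d))) (n : ℕ) : Set (List (Fin d)) :=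
  {w ∈ T | w.length = n}

/-- `Δ_n = ∪_{i=0}^n T_i`: the set of vertices of `T` at distance at most `n`. -/
def ball {d : ℕ} (T : Set (List (Fin d))) (n : ℕ) : Set (List (Fin d)) :=
  {w ∈ T | w.length ≤ n}

/-- The statement that the expanding number `γ_T = lim_n |T_{n+1}|/|T_n|` exists
and equals `γ`. -/
def HasExpandingNumber {d : ℕ} (T : Set (List (Fin d))) (γ : ℝ) : Prop :=
  Tendsto (fun n : ℕ => ((level T (n + 1)).ncard : ℝ) / ((level T n).ncard : ℝ)) atTop (nhds γ)

/-- `|P(Δ_n, 𝒯)|`: the number of restrictions of labeled trees of `𝒯` to `Δ_n`. -/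
noncomputable def ballBlockCount {d : ℕ} {A : Type*} (T : Set (List (Fin d)))
    (𝒯 : Set (List (Fin d) → A)) (n : ℕ) : ℕ :=
  Set.ncard ((fun t (w : ball T n) => t (w : List (Fin d))) '' 𝒯)

/-- The entropy of a tree-shift, `h(𝒯) = limsup_n log |P(Δ_n,𝒯)| / |Δ_n|`. -/
noncomputable def treeEntropy {d : ℕ} {A : Type*} (T : Set (List (Fin d)))
    (𝒯 : Set (List (Fin d) → A)) : ℝ :=
  limsup (fun n : ℕ => Real.log (ballBlockCount T 𝒯 n) / ((ball T n).ncard : ℝ)) atTop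

/-- `S` is an independence set for `𝒯`: every assignment of symbols on `S`
extends to an element of `𝒯`. -/
def IsIndepSet {I A : Type*} (𝒯 : Set (I → A)) (S : Set I) : Prop :=
  ∀ u : I → A, ∃ t ∈ 𝒯, ∀ w ∈ S, t w = u w

/-- `𝒯` is a tree-shift on `T`: the set of labelings of `T` avoiding every pattern
from some set `F` of forbidden finite patterns (a pattern is a finitely supported
partial labeling; it appears in `t` at a vertex `g ∈ T` if every cell of the pattern,
translated to sit below `g`, lies in `T` and carries the prescribed label). -/
def IsTreeShift {d : ℕ} {A : Type*} (T : Set (List (Fin d)))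
    (𝒯 : Set (List (Fin d) → A)) : Prop :=
  ∃ F : Set (List (Fin d) → Option A),
    (∀ p ∈ F, {w | p w ≠ none}.Finite) ∧
    𝒯 = {t | ∀ p ∈ F, ∀ g ∈ T,
          ¬ ∀ w : List (Fin d), ∀ a : A, p w = some a → g ++ w ∈ T ∧ t (g ++ w) = a}

/-- The boundary independence property: there are `l ≥ 1` and sets
`S_n ⊆ Δ_n \ Δ_{n−l}` (for `n ≥ l`), each an independence set for `𝒯`, with
`limsup_n |S_n ∩ Δ_n|/|Δ_n| > 0`. -/
def BoundaryIndep {d : ℕ} {A : Type*} (T : Set (List (Fin d)))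
    (𝒯 : Set (List (Fin d) → A)) : Prop :=
  ∃ l : ℕ, 1 ≤ l ∧ ∃ S : ℕ → Set (List (Fin d)),
    (∀ n, l ≤ n → S n ⊆ ball T n \ ball T (n - l)) ∧
    (∀ n, l ≤ n → IsIndepSet 𝒯 (S n)) ∧
    0 < limsup (fun n : ℕ => ((S n ∩ ball T n).ncard : ℝ) / ((ball T n).ncard : ℝ)) atTop

/-- `|B_n^{(S)}(𝒯)|`: the number of restrictions of labeled trees of `𝒯` to `T_n`. -/
noncomputable def levelBlockCount {d : ℕ} {A : Type*} (T : Set (List (Fin d)))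
    (𝒯 : Set (List (Fin d) → A)) (n : ℕ) : ℕ :=
  Set.ncard ((fun t (w : level T n) => t (w : List (Fin d))) '' 𝒯)

/-- The surface entropy of a tree-shift,
`h^{(S)}(𝒯) = limsup_n log |B_n^{(S)}(𝒯)| / |T_n|`. -/
noncomputable def surfaceEntropy {d : ℕ} {A : Type*} (T : Set (List (Fin d)))
    (𝒯 : Set (List (Fin d) → A)) : ℝ :=
  limsup (fun n : ℕ => Real.log (levelBlockCount T 𝒯 n) / ((level T n).ncard : ℝ)) atTop



lemma finite_level {d n : ℕ} (T : Set (List (Fin d))) : (level T n).Finite :=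
  (List.finite_length_eq (Fin d) n).subset fun w hw => hw.2

lemma finite_ball {d n : ℕ} (T : Set (List (Fin d))) : (ball T n).Finite :=
  (List.finite_length_le (Fin d) n).subset fun w hw => hw.2

lemma level_subset_ball {d : ℕ} (T : Set (List (Fin d))) {m n : ℕ} (h : m ≤ n) :
    level T m ⊆ ball T n := fun w hw => ⟨hw.1, hw.2 ▸ h⟩



lemma lbc_le {d n : ℕ} (T : Set (List (Fin d))) (𝒯 : Set (List (Fin d) → Bool)) :
    levelBlockCount T 𝒯 n ≤ 2 ^ (level T n).ncard := by
  haveI : Finite (level T n) := (finite_level T).to_subtype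
  calc levelBlockCount T 𝒯 n ≤ (Set.univ : Set ((level T n) → Bool)).ncard :=
        Set.ncard_le_ncard (Set.subset_univ _) Set.finite_univ
    _ = Nat.card ((level T n) → Bool) := Set.ncard_univ _
    _ = 2 ^ (level T n).ncard := by
        rw [Nat.card_fun, Nat.card_eq_two_iff.mpr ⟨false, true, by simp, by ext b; cases b <;> simp⟩,
          Nat.card_coe_set_eq]

open Classical in
lemma lbc_ge {d n : ℕ} (T : Set (List (Fin d))) (𝒯 : Set (List (Fin d) → Bool))
    {S : Set (List (Fin d))} (hsub : S ⊆ level T n) (hind : IsIndepSet 𝒯 S) :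
    2 ^ S.ncard ≤ levelBlockCount T 𝒯 n := by
  haveI : Finite (level T n) := (finite_level T).to_subtype
  haveI : Finite S := (((finite_level T).subset hsub)).to_subtype
  set E := ((fun t (w : level T n) => t (w : List (Fin d))) '' 𝒯) with hE
  haveI : Finite E := Set.Finite.to_subtype (Set.toFinite _)
  have hsurj : Function.Surjective
      (fun (e : E) (w : S) => (e : (level T n) → Bool) ⟨w, hsub w.2⟩) := by
    intro g
    obtain ⟨t, ht, hag⟩ := hind (fun w => if h : w ∈ S then g ⟨w, h⟩ else false)
    refine ⟨⟨fun w => t w, ⟨t, ht, rfl⟩⟩, ?_⟩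
    funext w
    simpa [dif_pos w.2] using hag w w.2
  calc 2 ^ S.ncard = Nat.card (S → Bool) := by
        rw [Nat.card_fun, Nat.card_eq_two_iff.mpr ⟨false, true, by simp, by ext b; cases b <;> simp⟩,
          Nat.card_coe_set_eq]
    _ ≤ Nat.card E := Nat.card_le_card_of_surjective _ hsurj
    _ = levelBlockCount T 𝒯 n := by rw [Nat.card_coe_set_eq]; rfl

section Chernoff
open Finset

lemma chernoff (N m : ℕ) {x : ℝ} (hx0 : 0 < x) (hx1 : x ≤ 1) :
    (∑ k ∈ Finset.range m, (N.choose k : ℝ)) * x ^ (m - 1) ≤ (1 + x) ^ N := by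
  have step1 : (∑ k ∈ Finset.range m, (N.choose k : ℝ)) * x ^ (m - 1)
      ≤ ∑ k ∈ Finset.range m, (N.choose k : ℝ) * x ^ k := by
    rw [Finset.sum_mul]
    refine Finset.sum_le_sum fun k hk => ?_
    exact mul_le_mul_of_nonneg_left
      (pow_le_pow_of_le_one hx0.le hx1 (Nat.le_sub_one_of_lt (Finset.mem_range.1 hk)))
      (Nat.cast_nonneg _)
  have step2 : ∑ k ∈ Finset.range m, (N.choose k : ℝ) * x ^ k
      ≤ ∑ k ∈ Finset.range (max m (N + 1)), (N.choose k : ℝ) * x ^ k := by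
    refine Finset.sum_le_sum_of_subset_of_nonneg (Finset.range_subset_range.2 (le_max_left _ _))
      fun k _ _ => by positivity
  have step3 : ∑ k ∈ Finset.range (max m (N + 1)), (N.choose k : ℝ) * x ^ k
      = ∑ k ∈ Finset.range (N + 1), (N.choose k : ℝ) * x ^ k := by
    refine (Finset.sum_subset (Finset.range_subset_range.2 (le_max_right _ _)) ?_).symm
    intro k _ hk
    rw [Nat.choose_eq_zero_of_lt (by simpa using Finset.mem_range.not.1 hk)]
    simp
  have step4 : ∑ k ∈ Finset.range (N + 1), (N.choose k : ℝ) * x ^ k = (1 + x) ^ N := by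
    rw [add_comm (1 : ℝ) x, add_pow]
    refine Finset.sum_congr rfl fun k _ => by ring
  linarith

lemma chernoff' {h : ℝ} (hh : 0 < h) : ∃ δ : ℝ, 0 < δ ∧ δ ≤ 1 ∧
    ∀ N : ℕ, 1 ≤ N →
      (∑ k ∈ Finset.range ⌈δ * N⌉₊, (N.choose k : ℝ)) < Real.exp (h * N) := by
  obtain ⟨s, hseq⟩ : ∃ s : ℝ, s = 1 + 8 / h := ⟨_, rfl⟩
  have h8h : 0 < 8 / h := by positivity
  have hs1 : 1 ≤ s := by rw [hseq]; linarith
  have hs0 : 0 < s := by linarith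
  obtain ⟨δ, hδeq⟩ : ∃ δ : ℝ, δ = Real.exp (-s) := ⟨_, rfl⟩
  have hδ0 : 0 < δ := hδeq ▸ Real.exp_pos _
  have hδ1 : δ ≤ 1 := by rw [hδeq, Real.exp_le_one_iff]; linarith
  refine ⟨δ, hδ0, hδ1, fun N hN => ?_⟩
  have hNpos : (0 : ℝ) < N := by exact_mod_cast hN
  obtain ⟨m, hmeq⟩ : ∃ m : ℕ, m = ⌈δ * N⌉₊ := ⟨_, rfl⟩
  have hm1 : 1 ≤ m := by
    rw [hmeq]
    refine Nat.one_le_iff_ne_zero.2 ?_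
    simp only [ne_eq, Nat.ceil_eq_zero, not_le]
    positivity
  have hexp : s ^ 2 / 4 ≤ Real.exp s := by
    have h2 : 1 + s / 2 ≤ Real.exp (s / 2) := by
      have := Real.add_one_le_exp (s / 2); linarith
    have h3 : Real.exp (s / 2) ^ 2 = Real.exp s := by
      rw [sq, ← Real.exp_add]; ring_nf
    nlinarith [Real.exp_pos (s / 2)]
  have hδle : δ ≤ 4 / s ^ 2 := by
    have h4 : (0:ℝ) < s ^ 2 / 4 := by positivity
    calc δ = (Real.exp s)⁻¹ := by rw [hδeq, Real.exp_neg]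
      _ ≤ (s ^ 2 / 4)⁻¹ := by
          apply inv_anti₀ h4 hexp
      _ = 4 / s ^ 2 := by field_simp
  have hkey : δ * (1 + s) < h := by
    have h1 : δ * (1 + s) ≤ δ * (2 * s) := by nlinarith
    have h2 : δ * (2 * s) ≤ (4 / s ^ 2) * (2 * s) :=
      mul_le_mul_of_nonneg_right hδle (by positivity)
    have h3 : (4 / s ^ 2) * (2 * s) = 8 / s := by field_simp; ring
    have h8 : (8:ℝ) < s * h := (div_lt_iff₀ hh).1 (by linarith : 8 / h < s)
    have h4 : 8 / s < h := by rw [div_lt_iff₀ hs0, mul_comm]; exact h8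
    linarith
  have hmain := chernoff N m hδ0 hδ1
  have hxpow : (0:ℝ) < δ ^ (m - 1) := by positivity
  have hcast : ((m - 1 : ℕ) : ℝ) = (m : ℝ) - 1 := by
    have := Nat.cast_sub (R := ℝ) hm1; simpa using this
  have hmlt : ((m : ℝ) - 1) < δ * N := by
    have := Nat.ceil_lt_add_one (by positivity : (0:ℝ) ≤ δ * N)
    have hm' : (m : ℝ) < δ * N + 1 := by rw [hmeq]; exact_mod_cast this
    linarith
  have h1δ : (1 + δ) ^ N ≤ Real.exp (δ * N) := by
    calc (1 + δ) ^ N ≤ Real.exp δ ^ N :=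
          pow_le_pow_left₀ (by positivity) (by linarith [Real.add_one_le_exp δ]) N
      _ = Real.exp (δ * N) := by rw [← Real.exp_nat_mul]; ring_nf
  have hpow : δ ^ (m - 1) = Real.exp (((m:ℝ) - 1) * (-s)) := by
    rw [hδeq, ← Real.exp_nat_mul, hcast]
  have h2 : Real.exp (δ * N) < Real.exp (h * N) * δ ^ (m - 1) := by
    rw [hpow, ← Real.exp_add]
    apply Real.exp_lt_exp.2
    have hb : -(s * (δ * N)) ≤ ((m:ℝ) - 1) * (-s) := by nlinarith
    nlinarith [hkey, hNpos]
  have hfin : (∑ k ∈ Finset.range m, (N.choose k : ℝ)) * δ ^ (m - 1)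
      < Real.exp (h * N) * δ ^ (m - 1) := lt_of_le_of_lt (hmain.trans h1δ) h2
  have hres : (∑ k ∈ Finset.range m, (N.choose k : ℝ)) < Real.exp (h * N) :=
    (mul_lt_mul_iff_of_pos_right hxpow).1 hfin
  rw [hmeq] at hres
  exact hres

end Chernoff

open Classical in
lemma exists_indep {d : ℕ} (T : Set (List (Fin d))) (𝒯 : Set (List (Fin d) → Bool)) (n m : ℕ)
    (hcard : ∑ k ∈ Finset.range m, Nat.choose ((level T n).ncard) k < levelBlockCount T 𝒯 n) :
    ∃ s : Set (List (Fin d)), s ⊆ level T n ∧ IsIndepSet 𝒯 s ∧ m ≤ s.ncard := by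
  haveI : Finite (level T n) := (finite_level T).to_subtype
  set G : Finset (List (Fin d)) := (finite_level T).toFinset with hG
  have hGmem : ∀ w, w ∈ G ↔ w ∈ level T n := fun w => Set.Finite.mem_toFinset _
  have hN : G.card = (level T n).ncard := (Set.ncard_eq_toFinset_card _ (finite_level T)).symm
  set E := ((fun t (w : level T n) => t (w : List (Fin d))) '' 𝒯) with hE
  haveI : Finite E := Set.Finite.to_subtype (Set.toFinite _)
  set g : ((level T n) → Bool) → Finset (List (Fin d)) :=
    fun e => G.filter (fun w => ∃ hw : w ∈ level T n, e ⟨w, hw⟩ = true) with hg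
  have hmemg : ∀ e w (hw : w ∈ level T n), w ∈ g e ↔ e ⟨w, hw⟩ = true := by
    intro e w hw
    refine ⟨fun h => ?_, fun h => Finset.mem_filter.2 ⟨(hGmem w).2 hw, ⟨hw, h⟩⟩⟩
    exact (Finset.mem_filter.1 h).2.choose_spec
  have ginj : Function.Injective g := by
    intro e e' hee
    funext w
    rw [Bool.eq_iff_iff, ← hmemg e w.1 w.2, ← hmemg e' w.1 w.2]
    show w.1 ∈ g e ↔ w.1 ∈ g e'
    rw [hee]
  have hfin : (g '' E).Finite := Set.Finite.image _ (Set.toFinite _)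
  set 𝒜 : Finset (Finset (List (Fin d))) := hfin.toFinset with h𝒜
  have h𝒜mem : ∀ v, v ∈ 𝒜 ↔ v ∈ g '' E := fun v => Set.Finite.mem_toFinset _
  have h𝒜card : 𝒜.card = levelBlockCount T 𝒯 n := by
    rw [h𝒜, ← Set.ncard_eq_toFinset_card _ hfin, Set.ncard_image_of_injective _ ginj]
    rfl
  have h𝒜sub : ∀ v ∈ 𝒜, v ⊆ G := by
    intro v hv
    obtain ⟨e, _, rfl⟩ := (h𝒜mem v).1 hv
    exact Finset.filter_subset _ _
  -- there is a shattered set of size ≥ m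
  obtain ⟨s, hshat, hscard⟩ : ∃ s, 𝒜.Shatters s ∧ m ≤ s.card := by
    by_contra hcon
    push_neg at hcon
    have hsub : 𝒜.shatterer ⊆ (G.powerset.filter (fun s => s.card < m)) := by
      intro s hs
      rw [Finset.mem_shatterer] at hs
      obtain ⟨t, ht, hst⟩ := hs.exists_superset
      refine Finset.mem_filter.2 ⟨Finset.mem_powerset.2 (hst.trans (h𝒜sub t ht)), ?_⟩
      exact hcon s hs
    have hcount : (G.powerset.filter (fun s => s.card < m)).card
        ≤ ∑ k ∈ Finset.range m, Nat.choose ((level T n).ncard) k := by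
      rw [Finset.card_eq_sum_card_fiberwise
        (f := Finset.card) (t := Finset.range m)
        (fun s hs => Finset.mem_range.2 (Finset.mem_filter.1 hs).2)]
      refine Finset.sum_le_sum fun k _ => ?_
      have : ((G.powerset.filter (fun s => s.card < m)).filter (fun s => s.card = k))
          ⊆ G.powersetCard k := by
        intro s hs
        simp only [Finset.mem_filter, Finset.mem_powerset] at hs
        exact Finset.mem_powersetCard.2 ⟨hs.1.1, hs.2⟩
      calc ((G.powerset.filter (fun s => s.card < m)).filter (fun s => s.card = k)).card
          ≤ (G.powersetCard k).card := Finset.card_le_card this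
        _ = Nat.choose ((level T n).ncard) k := by rw [Finset.card_powersetCard, hN]
    have := (Finset.card_le_card_shatterer 𝒜).trans ((Finset.card_le_card hsub).trans hcount)
    omega
  have hsG : s ⊆ G := by
    obtain ⟨t, ht, hst⟩ := hshat.exists_superset
    exact hst.trans (h𝒜sub t ht)
  refine ⟨(s : Set (List (Fin d))), ?_, ?_, ?_⟩
  · intro w hw
    exact (hGmem w).1 (hsG hw)
  · intro u
    obtain ⟨v, hv, hsv⟩ := hshat (Finset.filter_subset (fun w => u w = true) s)
    obtain ⟨e, heE, rfl⟩ := (h𝒜mem v).1 hv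
    obtain ⟨t₀, ht₀, het⟩ := heE
    refine ⟨t₀, ht₀, fun w hw => ?_⟩
    have hw' : w ∈ s := hw
    have hwlev : w ∈ level T n := (hGmem w).1 (hsG hw')
    have h1 : w ∈ g e ↔ t₀ w = true := by
      rw [hmemg e w hwlev, ← het]
    have h2 : w ∈ s ∩ g e ↔ u w = true := by
      rw [hsv, Finset.mem_filter]
      exact ⟨fun ⟨_, h⟩ => h, fun h => ⟨hw', h⟩⟩
    rw [Bool.eq_iff_iff, ← h1]
    rw [Finset.mem_inter] at h2
    constructor
    · intro hge; exact h2.1 ⟨hw', hge⟩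
    · intro hu; exact (h2.2 hu).2
  · rwa [Set.ncard_coe_finset]


lemma ball_succ_subset {d : ℕ} (T : Set (List (Fin d))) (n : ℕ) :
    ball T (n + 1) ⊆ ball T n ∪ level T (n + 1) := by
  intro w hw
  rcases Nat.lt_or_ge w.length (n + 1) with h | h
  · exact Or.inl ⟨hw.1, Nat.lt_succ_iff.1 h⟩
  · exact Or.inr ⟨hw.1, le_antisymm hw.2 h⟩

lemma ball_ncard_le_sum {d : ℕ} (T : Set (List (Fin d))) (n : ℕ) :
    (ball T n).ncard ≤ ∑ k ∈ Finset.range (n + 1), (level T k).ncard := by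
  induction n with
  | zero =>
      have : ball T 0 = level T 0 := by
        ext w; exact ⟨fun h => ⟨h.1, Nat.le_zero.1 h.2⟩, fun h => ⟨h.1, h.2.le⟩⟩
      simp [this]
  | succ n ih =>
      calc (ball T (n + 1)).ncard ≤ (ball T n ∪ level T (n + 1)).ncard :=
            Set.ncard_le_ncard (ball_succ_subset T n)
              ((finite_ball T).union (finite_level T))
        _ ≤ (ball T n).ncard + (level T (n + 1)).ncard := Set.ncard_union_le _ _
        _ ≤ _ := by rw [Finset.sum_range_succ]; omega

lemma growth {d : ℕ} (T : Set (List (Fin d))) {γ : ℝ}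
    (hγ : HasExpandingNumber T γ) (hγ1 : 1 < γ) :
    ∃ K : ℝ, 1 ≤ K ∧ ∃ n₁ : ℕ, ∀ n, n₁ ≤ n →
      1 ≤ (level T n).ncard ∧ ((ball T n).ncard : ℝ) ≤ K * ((level T n).ncard : ℝ) := by
  set a : ℕ → ℝ := fun n => ((level T n).ncard : ℝ) with ha
  set γ' : ℝ := (1 + γ) / 2 with hγ'
  have hγ'1 : 1 < γ' := by rw [hγ']; linarith
  have hγ'lt : γ' < γ := by rw [hγ']; linarith
  obtain ⟨N₀, hN₀⟩ := eventually_atTop.1 (hγ.eventually (lt_mem_nhds hγ'lt))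
  have apos : ∀ n, N₀ ≤ n → 0 < a n := by
    intro n hn
    by_contra hle
    have h0 : a n = 0 := le_antisymm (not_lt.1 hle) (Nat.cast_nonneg _)
    have := hN₀ n hn
    rw [show ((level T n).ncard : ℝ) = 0 from h0, div_zero] at this
    linarith
  have astep : ∀ n, N₀ ≤ n → γ' * a n ≤ a (n + 1) := by
    intro n hn
    exact le_of_lt ((lt_div_iff₀ (apos n hn)).1 (hN₀ n hn))
  set B : ℝ := γ' / (γ' - 1) with hB
  have hγ'0 : 0 < γ' - 1 := by linarith
  have hBdef : B * (γ' - 1) = γ' := by rw [hB]; field_simp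
  have hB1 : 1 ≤ B := by
    rw [hB, le_div_iff₀ hγ'0]; linarith
  set C₀ : ℝ := ∑ k ∈ Finset.range N₀, a k with hC₀
  have hC₀0 : 0 ≤ C₀ := Finset.sum_nonneg fun k _ => Nat.cast_nonneg _
  have key : ∀ n, N₀ ≤ n → ((ball T n).ncard : ℝ) ≤ C₀ + B * a n := by
    intro n hn
    induction n, hn using Nat.le_induction with
    | base =>
        have h1 : ((ball T N₀).ncard : ℝ) ≤ ∑ k ∈ Finset.range (N₀ + 1), a k := by
          have := ball_ncard_le_sum T N₀
          calc ((ball T N₀).ncard : ℝ)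
              ≤ ((∑ k ∈ Finset.range (N₀ + 1), (level T k).ncard : ℕ) : ℝ) := by
                exact_mod_cast this
            _ = ∑ k ∈ Finset.range (N₀ + 1), a k := by push_cast; rfl
        rw [Finset.sum_range_succ] at h1
        have : a N₀ ≤ B * a N₀ := le_mul_of_one_le_left (Nat.cast_nonneg _) hB1
        linarith
    | succ n hn ih =>
        have hsub : ((ball T (n + 1)).ncard : ℝ) ≤ ((ball T n).ncard : ℝ) + a (n + 1) := by
          have h1 : (ball T (n+1)).ncard ≤ (ball T n).ncard + (level T (n+1)).ncard :=
            le_trans (Set.ncard_le_ncard (ball_succ_subset T n)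
              ((finite_ball T).union (finite_level T))) (Set.ncard_union_le _ _)
          show ((ball T (n + 1)).ncard : ℝ) ≤ ((ball T n).ncard : ℝ) + ((level T (n+1)).ncard : ℝ)
          exact_mod_cast h1
        have hstep := astep n hn
        have han : 0 < a n := apos n hn
        have : B * a n + a (n + 1) ≤ B * a (n + 1) := by nlinarith
        linarith
  refine ⟨C₀ + B, by linarith, N₀, fun n hn => ?_⟩
  have h1 : 1 ≤ (level T n).ncard := by
    have h0 : (0:ℝ) < ((level T n).ncard : ℝ) := apos n hn
    have : 0 < (level T n).ncard := by exact_mod_cast h0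
    omega
  refine ⟨h1, ?_⟩
  have h1' : (1 : ℝ) ≤ a n := by show (1:ℝ) ≤ ((level T n).ncard : ℝ); exact_mod_cast h1
  have := key n hn
  have hC : C₀ ≤ C₀ * a n := le_mul_of_one_le_right hC₀0 h1'
  calc ((ball T n).ncard : ℝ) ≤ C₀ + B * a n := this
    _ ≤ C₀ * a n + B * a n := by linarith
    _ = (C₀ + B) * a n := by ring




lemma indep_mono {I A : Type*} {𝒯 : Set (I → A)} {S S' : Set I}
    (h : S' ⊆ S) (hS : IsIndepSet 𝒯 S) : IsIndepSet 𝒯 S' := fun u =>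
  let ⟨t, ht, hta⟩ := hS u
  ⟨t, ht, fun w hw => hta w (h hw)⟩

lemma nat_div_le_one {p q : ℕ} (h : p ≤ q) : (p : ℝ) / (q : ℝ) ≤ 1 := by
  rcases Nat.eq_zero_or_pos q with hq | hq
  · subst hq; interval_cases p; simp
  · rw [div_le_one (by exact_mod_cast hq)]; exact_mod_cast h

lemma ncard_le_sum_of_cover {α ι : Type*} (u : Finset ι) (S : Set α) (A : ι → Set α)
    (hS : S.Finite) (hA : ∀ j, (A j).Finite) (hcov : S ⊆ ⋃ j ∈ u, A j) :
    S.ncard ≤ ∑ j ∈ u, (A j).ncard := by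
  classical
  induction u using Finset.induction generalizing S with
  | empty => simp only [Finset.notMem_empty, Set.iUnion_of_empty, Set.iUnion_empty,
      Set.subset_empty_iff] at hcov; simp [hcov]
  | @insert j u hj ih =>
      have hsplit : S = (S ∩ A j) ∪ (S \ A j) := (Set.inter_union_diff S (A j)).symm
      have hrest : (S \ A j) ⊆ ⋃ i ∈ u, A i := by
        intro w hw
        have := hcov hw.1
        simp only [Finset.mem_insert, Set.mem_iUnion] at this ⊢
        obtain ⟨i, hi, hwi⟩ := this
        rcases hi with rfl | hi
        · exact absurd hwi hw.2
        · exact ⟨i, hi, hwi⟩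
      calc S.ncard = ((S ∩ A j) ∪ (S \ A j)).ncard := by rw [← hsplit]
        _ ≤ (S ∩ A j).ncard + (S \ A j).ncard := Set.ncard_union_le _ _
        _ ≤ (A j).ncard + ∑ i ∈ u, (A i).ncard :=
            Nat.add_le_add (Set.ncard_le_ncard Set.inter_subset_right (hA j))
              (ih _ (hS.subset Set.diff_subset) hrest)
        _ = ∑ i ∈ insert j u, (A i).ncard := by rw [Finset.sum_insert hj]

lemma f_nonneg {d : ℕ} (T : Set (List (Fin d))) (𝒯 : Set (List (Fin d) → Bool)) (n : ℕ) :
    0 ≤ Real.log (levelBlockCount T 𝒯 n) / ((level T n).ncard : ℝ) :=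
  div_nonneg (Real.log_natCast_nonneg _) (Nat.cast_nonneg _)

lemma f_le_log2 {d : ℕ} (T : Set (List (Fin d))) (𝒯 : Set (List (Fin d) → Bool)) (n : ℕ) :
    Real.log (levelBlockCount T 𝒯 n) / ((level T n).ncard : ℝ) ≤ Real.log 2 := by
  have hlog2 : 0 ≤ Real.log 2 := Real.log_nonneg one_le_two
  rcases Nat.eq_zero_or_pos (level T n).ncard with h | h
  · rw [h]; simpa using hlog2
  have hpos : (0:ℝ) < ((level T n).ncard : ℝ) := by exact_mod_cast h
  have hloglbc : Real.log (levelBlockCount T 𝒯 n) ≤ ((level T n).ncard : ℝ) * Real.log 2 := by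
    rcases Nat.eq_zero_or_pos (levelBlockCount T 𝒯 n) with h0 | h0
    · rw [h0]; simpa using mul_nonneg hpos.le hlog2
    · calc Real.log (levelBlockCount T 𝒯 n)
          ≤ Real.log ((2 ^ (level T n).ncard : ℕ) : ℝ) := by
            apply Real.log_le_log (by exact_mod_cast h0)
            exact_mod_cast lbc_le T 𝒯
        _ = ((level T n).ncard : ℝ) * Real.log 2 := by
            push_cast
            rw [Real.log_pow]
  rw [div_le_iff₀ hpos]
  linarith [hloglbc]

lemma bwd {d : ℕ} (T : Set (List (Fin d))) (hroot : ([] : List (Fin d)) ∈ T)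
    (𝒯 : Set (List (Fin d) → Bool)) (h : BoundaryIndep T 𝒯) : 0 < surfaceEntropy T 𝒯 := by
  obtain ⟨l, hl, S, hsub, hindep, hpos⟩ := h
  set g : ℕ → ℝ := fun n => ((S n ∩ ball T n).ncard : ℝ) / ((ball T n).ncard : ℝ) with hg
  have hb1 : ∀ n, 1 ≤ (ball T n).ncard := by
    intro n
    have : ([] : List (Fin d)) ∈ ball T n := ⟨hroot, by simp⟩
    have := Set.ncard_pos (finite_ball T) |>.2 ⟨_, this⟩
    omega
  have hcob : IsCoboundedUnder (· ≤ ·) atTop g :=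
    Filter.IsBoundedUnder.isCoboundedUnder_le
      ⟨0, Filter.eventually_map.2 (Filter.Eventually.of_forall fun n =>
        div_nonneg (Nat.cast_nonneg _) (Nat.cast_nonneg _))⟩
  obtain ⟨c, hc0, hcl⟩ : ∃ c : ℝ, 0 < c ∧ c < limsup g atTop :=
    ⟨limsup g atTop / 2, by linarith, by linarith⟩
  have hfreq : ∃ᶠ n in atTop, c < g n := frequently_lt_of_lt_limsup hcob hcl
  have hlog2 : 0 < Real.log 2 := Real.log_pos one_lt_two
  have hl0 : (0:ℝ) < (l:ℝ) := by exact_mod_cast hl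
  -- key pointwise claim
  have key : ∀ n, l ≤ n → c < g n → ∃ j, n - l < j ∧ j ≤ n ∧
      (c / l) * Real.log 2 ≤
        Real.log (levelBlockCount T 𝒯 j) / ((level T j).ncard : ℝ) := by
    intro n hn hcg
    have hSsub : S n ⊆ ball T n := (hsub n hn).trans Set.diff_subset
    have hSball : S n ∩ ball T n = S n := Set.inter_eq_self_of_subset_left hSsub
    have hSfin : (S n).Finite := (finite_ball T).subset hSsub
    -- pigeonhole over levels
    have hcov : S n ⊆ ⋃ j ∈ Finset.Icc (n - l + 1) n, (S n ∩ level T j) := by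
      intro w hw
      have h1 := hsub n hn hw
      have hlen1 : w.length ≤ n := h1.1.2
      have hlen2 : ¬ (w.length ≤ n - l) := fun hc => h1.2 ⟨h1.1.1, hc⟩
      simp only [Set.mem_iUnion, Finset.mem_Icc]
      exact ⟨w.length, ⟨by omega, hlen1⟩, hw, h1.1.1, rfl⟩
    have hsum : (S n).ncard ≤ ∑ j ∈ Finset.Icc (n - l + 1) n, (S n ∩ level T j).ncard :=
      ncard_le_sum_of_cover _ _ _ hSfin (fun j => (finite_level T).subset
        Set.inter_subset_right) hcov
    obtain ⟨j, hjmem, hjle⟩ : ∃ j ∈ Finset.Icc (n - l + 1) n,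
        (S n).ncard ≤ l * (S n ∩ level T j).ncard := by
      by_contra hcon
      push_neg at hcon
      have hcard : (Finset.Icc (n - l + 1) n).card = l := by
        rw [Nat.card_Icc]; omega
      have : ∑ j ∈ Finset.Icc (n - l + 1) n, (S n ∩ level T j).ncard * l
          < ∑ j ∈ Finset.Icc (n - l + 1) n, (S n).ncard := by
        apply Finset.sum_lt_sum_of_nonempty
        · rw [← Finset.card_pos, hcard]; omega
        · intro j hj
          have := hcon j hj
          calc (S n ∩ level T j).ncard * l = l * (S n ∩ level T j).ncard := Nat.mul_comm _ _
            _ < (S n).ncard := this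
      rw [Finset.sum_const, hcard, ← Finset.sum_mul, smul_eq_mul] at this
      have h2 : (S n).ncard * l < (S n).ncard * l := by
        calc (S n).ncard * l ≤ (∑ j ∈ Finset.Icc (n - l + 1) n, (S n ∩ level T j).ncard) * l :=
              Nat.mul_le_mul_right _ hsum
          _ < l * (S n).ncard := this
          _ = (S n).ncard * l := Nat.mul_comm _ _
      omega
    rw [Finset.mem_Icc] at hjmem
    refine ⟨j, by omega, hjmem.2, ?_⟩
    set A := S n ∩ level T j with hA
    have hAindep : IsIndepSet 𝒯 A := indep_mono Set.inter_subset_left (hindep n hn)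
    have hAsub : A ⊆ level T j := Set.inter_subset_right
    have hlbc := lbc_ge T 𝒯 hAsub hAindep
    -- numeric facts
    have hbn : (0:ℝ) < ((ball T n).ncard : ℝ) := by
      have := hb1 n; exact_mod_cast Nat.lt_of_lt_of_le Nat.zero_lt_one this
    have hgn : c < ((S n).ncard : ℝ) / ((ball T n).ncard : ℝ) := by
      rw [hg] at hcg; simp only at hcg; rwa [hSball] at hcg
    have hcb : c * ((ball T n).ncard : ℝ) < ((S n).ncard : ℝ) := (lt_div_iff₀ hbn).1 hgn
    have hAcard : ((S n).ncard : ℝ) ≤ (l : ℝ) * ((A).ncard : ℝ) := by exact_mod_cast hjle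
    have hAn : (0:ℝ) < ((A).ncard : ℝ) := by
      nlinarith
    have haj : ((level T j).ncard : ℝ) ≤ ((ball T n).ncard : ℝ) := by
      have : level T j ⊆ ball T n := level_subset_ball T hjmem.2
      exact_mod_cast Set.ncard_le_ncard this (finite_ball T)
    have hajpos : (0:ℝ) < ((level T j).ncard : ℝ) := by
      have : ((A).ncard : ℝ) ≤ ((level T j).ncard : ℝ) := by
        exact_mod_cast Set.ncard_le_ncard hAsub (finite_level T)
      linarith
    have hloglbc : ((A).ncard : ℝ) * Real.log 2 ≤ Real.log (levelBlockCount T 𝒯 j) := by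
      calc ((A).ncard : ℝ) * Real.log 2 = Real.log ((2 ^ (A).ncard : ℕ) : ℝ) := by
            push_cast; rw [Real.log_pow]
        _ ≤ Real.log (levelBlockCount T 𝒯 j) := by
            apply Real.log_le_log (by positivity)
            exact_mod_cast hlbc
    rw [le_div_iff₀ hajpos]
    calc c / l * Real.log 2 * ((level T j).ncard : ℝ)
        ≤ c / l * Real.log 2 * ((ball T n).ncard : ℝ) := by
          apply mul_le_mul_of_nonneg_left haj
          positivity
      _ ≤ ((A).ncard : ℝ) * Real.log 2 := by
          rw [div_mul_eq_mul_div, div_mul_eq_mul_div, div_le_iff₀ hl0]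
          nlinarith
      _ ≤ Real.log (levelBlockCount T 𝒯 j) := hloglbc
  -- conclude
  have hfreq2 : ∃ᶠ j in atTop, (c / l) * Real.log 2 ≤
      Real.log (levelBlockCount T 𝒯 j) / ((level T j).ncard : ℝ) := by
    rw [frequently_atTop]
    intro N
    obtain ⟨n, hn1, hn2⟩ := (hfreq.and_eventually (eventually_ge_atTop (N + l))).exists
    obtain ⟨j, hj1, _, hj3⟩ := key n (by omega) hn1
    exact ⟨j, by omega, hj3⟩
  have hbdd : IsBoundedUnder (· ≤ ·) atTop
      (fun n : ℕ => Real.log (levelBlockCount T 𝒯 n) / ((level T n).ncard : ℝ)) :=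
    ⟨Real.log 2, Filter.eventually_map.2 (Filter.Eventually.of_forall fun n => f_le_log2 T 𝒯 n)⟩
  have := le_limsup_of_frequently_le hfreq2 hbdd
  have hpos' : 0 < c / l * Real.log 2 := by positivity
  calc (0:ℝ) < c / l * Real.log 2 := hpos'
    _ ≤ surfaceEntropy T 𝒯 := this

open Classical in
lemma fwd {d : ℕ} (T : Set (List (Fin d))) (hroot : ([] : List (Fin d)) ∈ T)
    {γ : ℝ} (hγ : HasExpandingNumber T γ) (hγ1 : 1 < γ)
    (𝒯 : Set (List (Fin d) → Bool)) (hse : 0 < surfaceEntropy T 𝒯) : BoundaryIndep T 𝒯 := by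
  set f : ℕ → ℝ := fun n => Real.log (levelBlockCount T 𝒯 n) / ((level T n).ncard : ℝ) with hf
  have hcob : IsCoboundedUnder (· ≤ ·) atTop f :=
    Filter.IsBoundedUnder.isCoboundedUnder_le
      ⟨0, Filter.eventually_map.2 (Filter.Eventually.of_forall fun n => f_nonneg T 𝒯 n)⟩
  obtain ⟨h, hh0, hhl⟩ : ∃ h : ℝ, 0 < h ∧ h < limsup f atTop :=
    ⟨surfaceEntropy T 𝒯 / 2, by linarith, by
      have : limsup f atTop = surfaceEntropy T 𝒯 := rfl
      linarith⟩
  have hfreq : ∃ᶠ n in atTop, h < f n := frequently_lt_of_lt_limsup hcob hhl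
  obtain ⟨δ, hδ0, hδ1, hcher⟩ := chernoff' hh0
  obtain ⟨K, hK1, n₁, hgrow⟩ := growth T hγ hγ1
  have hK0 : (0:ℝ) < K := by linarith
  -- 𝒯 is nonempty
  obtain ⟨n₀, hn₀⟩ := hfreq.exists
  have h𝒯ne : ∃ t₀, t₀ ∈ 𝒯 := by
    have hlbc : levelBlockCount T 𝒯 n₀ ≠ 0 := by
      intro h0
      rw [hf] at hn₀; simp only at hn₀
      rw [h0] at hn₀
      simp only [Nat.cast_zero, Real.log_zero, zero_div] at hn₀
      linarith
    obtain ⟨e, t, ht, -⟩ := Set.nonempty_of_ncard_ne_zero hlbc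
    exact ⟨t, ht⟩
  obtain ⟨t₀, ht₀⟩ := h𝒯ne
  -- key claim
  have claim : ∀ n, n₁ ≤ n → h < f n → ∃ s : Set (List (Fin d)),
      s ⊆ level T n ∧ IsIndepSet 𝒯 s ∧ δ * ((level T n).ncard : ℝ) ≤ (s.ncard : ℝ) := by
    intro n hn hfn
    obtain ⟨hN1, -⟩ := hgrow n hn
    have hNpos : (0:ℝ) < ((level T n).ncard : ℝ) := by
      exact_mod_cast Nat.lt_of_lt_of_le Nat.zero_lt_one hN1
    have hlbc1 : 1 ≤ levelBlockCount T 𝒯 n := by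
      by_contra h0
      have h0' : levelBlockCount T 𝒯 n = 0 := by omega
      rw [hf] at hfn; simp only at hfn
      rw [h0'] at hfn
      simp only [Nat.cast_zero, Real.log_zero, zero_div] at hfn
      linarith
    have hlbcpos : (0:ℝ) < (levelBlockCount T 𝒯 n : ℝ) := by exact_mod_cast hlbc1
    have hlog : h * ((level T n).ncard : ℝ) < Real.log (levelBlockCount T 𝒯 n) := by
      rw [hf] at hfn; simp only at hfn
      rw [lt_div_iff₀ hNpos] at hfn
      linarith [hfn]
    have hexp : Real.exp (h * ((level T n).ncard : ℝ)) < (levelBlockCount T 𝒯 n : ℝ) := by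
      have := Real.exp_lt_exp.2 hlog
      rwa [Real.exp_log hlbcpos] at this
    have hcher' := hcher ((level T n).ncard) hN1
    have hreal : (∑ k ∈ Finset.range ⌈δ * ((level T n).ncard : ℝ)⌉₊,
        ((level T n).ncard.choose k : ℝ)) < (levelBlockCount T 𝒯 n : ℝ) :=
      lt_trans hcher' hexp
    have hnat : ∑ k ∈ Finset.range ⌈δ * ((level T n).ncard : ℝ)⌉₊,
        (level T n).ncard.choose k < levelBlockCount T 𝒯 n := by
      exact_mod_cast hreal
    obtain ⟨s, h1, h2, h3⟩ := exists_indep T 𝒯 n _ hnat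
    refine ⟨s, h1, h2, ?_⟩
    calc δ * ((level T n).ncard : ℝ) ≤ (⌈δ * ((level T n).ncard : ℝ)⌉₊ : ℝ) := Nat.le_ceil _
      _ ≤ (s.ncard : ℝ) := by exact_mod_cast h3
  set P : ℕ → Prop := fun n => n₁ ≤ n ∧ 1 ≤ n ∧ h < f n with hP
  set S : ℕ → Set (List (Fin d)) :=
    fun n => if hn : P n then (claim n hn.1 hn.2.2).choose else ∅ with hS
  have hSspec : ∀ n (hn : P n), S n ⊆ level T n ∧ IsIndepSet 𝒯 (S n) ∧
      δ * ((level T n).ncard : ℝ) ≤ ((S n).ncard : ℝ) := by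
    intro n hn
    have : S n = (claim n hn.1 hn.2.2).choose := by rw [hS]; exact dif_pos hn
    rw [this]
    exact (claim n hn.1 hn.2.2).choose_spec
  have hSempty : ∀ n, ¬ P n → S n = ∅ := by
    intro n hn; rw [hS]; exact dif_neg hn
  have hb1 : ∀ n, 1 ≤ (ball T n).ncard := by
    intro n
    have hmem : ([] : List (Fin d)) ∈ ball T n := ⟨hroot, by simp⟩
    have := Set.ncard_pos (finite_ball T) |>.2 ⟨_, hmem⟩
    omega
  refine ⟨1, le_refl 1, S, ?_, ?_, ?_⟩
  · intro n hn w hw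
    by_cases hPn : P n
    · have hlev := (hSspec n hPn).1 hw
      refine ⟨⟨hlev.1, hlev.2.le⟩, ?_⟩
      intro hc
      have := hc.2
      have := hlev.2
      omega
    · rw [hSempty n hPn] at hw
      exact absurd hw (Set.notMem_empty w)
  · intro n _
    by_cases hPn : P n
    · exact (hSspec n hPn).2.1
    · rw [hSempty n hPn]
      exact fun u => ⟨t₀, ht₀, fun w hw => absurd hw (Set.notMem_empty w)⟩
  · have hfreq2 : ∃ᶠ n in atTop,
        δ / K ≤ ((S n ∩ ball T n).ncard : ℝ) / ((ball T n).ncard : ℝ) := by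
      rw [frequently_atTop]
      intro M
      obtain ⟨n, hn1, hn2⟩ :=
        (hfreq.and_eventually (eventually_ge_atTop (max M (max n₁ 1)))).exists
      have hPn : P n := ⟨le_trans (le_max_left _ _) (le_of_max_le_right hn2), 
        le_trans (le_max_right _ _) (le_of_max_le_right hn2), hn1⟩
      obtain ⟨hsub, -, hcard⟩ := hSspec n hPn
      refine ⟨n, le_trans (le_max_left _ _) hn2, ?_⟩
      have hinter : S n ∩ ball T n = S n :=
        Set.inter_eq_self_of_subset_left (hsub.trans (level_subset_ball T le_rfl))
      rw [hinter]
      obtain ⟨hN1, hKbound⟩ := hgrow n hPn.1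
      have hbn : (0:ℝ) < ((ball T n).ncard : ℝ) := by
        have := hb1 n
        exact_mod_cast Nat.lt_of_lt_of_le Nat.zero_lt_one this
      rw [div_le_div_iff₀ hK0 hbn]
      have hNnn : (0:ℝ) ≤ ((level T n).ncard : ℝ) := Nat.cast_nonneg _
      nlinarith [hcard, hKbound, hδ0.le]
    have hbdd : IsBoundedUnder (· ≤ ·) atTop
        (fun n : ℕ => ((S n ∩ ball T n).ncard : ℝ) / ((ball T n).ncard : ℝ)) :=
      ⟨1, Filter.eventually_map.2 (Filter.Eventually.of_forall fun n =>
        nat_div_le_one (Set.ncard_le_ncard Set.inter_subset_right (finite_ball T)))⟩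
    have := le_limsup_of_frequently_le hfreq2 hbdd
    have : (0:ℝ) < δ / K := by positivity
    linarith [le_limsup_of_frequently_le hfreq2 hbdd]

/-- For a tree-shift `𝒯 ⊆ {0,1}^T` on an expandable tree
(`γ_T > 1`), `h^{(S)}(𝒯) > 0` iff `𝒯` has the boundary independence property. -/
theorem pos_surfaceEntropy_iff_boundaryIndep
    (d : ℕ) (T : Set (List (Fin d))) (hT : IsTree T)
    (γ : ℝ) (hγ : HasExpandingNumber T γ) (hγ1 : 1 < γ)
    (𝒯 : Set (List (Fin d) → Bool)) (h𝒯 : IsTreeShift T 𝒯) :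
    0 < surfaceEntropy T 𝒯 ↔ BoundaryIndep T 𝒯 := by
  constructor
  · exact fun hse => fwd T hT.1 hγ hγ1 𝒯 hse
  · exact fun hb => bwd T hT.1 𝒯 hb
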